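/- Consider the density g(V) = |V| + e^{−|V|} in volume coordinates (which is C^1, even, strictly convex, with bounded derivative). For every fixed V₁ > 0, as V₂ → ∞ the equilibrium point Ṽ converges to −log(1+e^{V₁}), and the limit of μ = P₃ − P₂ equals 2V₁ − log(1+e^{V₁}) + 2e^{−V₁/2} − 1, which is strictly positive for all V₁ > 0; hence μ > 0 for all V₁ ≤ V₂ and the double interval is always better. -/

import Mathlib

open Filter Real

noncomputable def Gd (v : ℝ) : ℝ := if v ≤ 0 then Real.exp v - 1 else 1 - Real.exp (-v)

lemma Gd_nonpos {v : ℝ} (hv : v ≤ 0) : Gd v = Real.exp v - 1 := if_pos hv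
lemma Gd_pos' {v : ℝ} (hv : 0 < v) : Gd v = 1 - Real.exp (-v) := if_neg (not_le.2 hv)

lemma strictMono_Gd : StrictMono Gd := by
  intro x y hxy
  rcases le_or_gt x 0 with hx | hx
  · rcases le_or_gt y 0 with hy | hy
    · rw [Gd_nonpos hx, Gd_nonpos hy]
      have := Real.exp_lt_exp.2 hxy; linarith
    · rw [Gd_nonpos hx, Gd_pos' hy]
      have h1 : Real.exp x ≤ 1 := Real.exp_le_one_iff.2 hx
      have h2 : Real.exp (-y) < 1 := Real.exp_lt_one_iff.2 (by linarith)
      linarith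
  · have hy : 0 < y := hx.trans hxy
    rw [Gd_pos' hx, Gd_pos' hy]
    have := Real.exp_lt_exp.2 (neg_lt_neg hxy); linarith

lemma abs_exp_bound {x : ℝ} (hx : 0 ≤ x) : x + Real.exp (-x) - 1 ≤ x ^ 2 := by
  have hmul : Real.exp x * Real.exp (-x) = 1 := by
    rw [← Real.exp_add]; simp
  nlinarith [Real.add_one_le_exp x, Real.add_one_le_exp (-x), Real.exp_pos (-x)]

lemma hasDerivAt_g (v : ℝ) :
    HasDerivAt (fun v : ℝ => |v| + Real.exp (-|v|)) (Gd v) v := by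
  rcases lt_trichotomy v 0 with hv | hv | hv
  · have h : HasDerivAt (fun v : ℝ => -v + Real.exp v) (-1 + Real.exp v) v :=
      ((hasDerivAt_id v).neg).add (Real.hasDerivAt_exp v)
    have he : (fun v : ℝ => |v| + Real.exp (-|v|)) =ᶠ[nhds v] (fun v : ℝ => -v + Real.exp v) := by
      filter_upwards [Iio_mem_nhds hv] with x hx
      rw [abs_of_neg hx, neg_neg]
    rw [Gd_nonpos hv.le]
    have := h.congr_of_eventuallyEq he
    rw [show Real.exp v - 1 = -1 + Real.exp v by ring]; exact this
  · subst hv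
    have hGd0 : Gd 0 = 0 := by simp [Gd]
    rw [hGd0, hasDerivAt_iff_isLittleO]
    rw [Asymptotics.isLittleO_iff]
    intro c hc
    filter_upwards [eventually_abs_sub_lt 0 hc] with x hx
    simp only [sub_zero, smul_zero, abs_zero, neg_zero, Real.exp_zero, sub_zero, zero_add] at *
    have h1 : (0:ℝ) ≤ |x| + Real.exp (-|x|) - 1 := by
      have := Real.add_one_le_exp (-|x|); linarith
    have h2 : |x| + Real.exp (-|x|) - 1 ≤ |x| ^ 2 := abs_exp_bound (abs_nonneg x)
    have : ‖|x| + Real.exp (-|x|) - 1‖ ≤ |x| ^ 2 := by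
      rw [Real.norm_eq_abs, abs_of_nonneg h1]; exact h2
    calc ‖|x| + Real.exp (-|x|) - 1‖ ≤ |x| ^ 2 := this
      _ ≤ c * ‖x‖ := by rw [Real.norm_eq_abs]; nlinarith [abs_nonneg x]
  · have h : HasDerivAt (fun v : ℝ => v + Real.exp (-v)) (1 + Real.exp (-v) * (-1)) v := by
      have hexp : HasDerivAt (fun v : ℝ => Real.exp (-v)) (Real.exp (-v) * (-1)) v :=
        (Real.hasDerivAt_exp (-v)).comp v (hasDerivAt_neg v)
      exact (hasDerivAt_id v).add hexp
    have he : (fun v : ℝ => |v| + Real.exp (-|v|)) =ᶠ[nhds v] (fun v : ℝ => v + Real.exp (-v)) := by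
      filter_upwards [Ioi_mem_nhds hv] with x hx
      rw [abs_of_pos hx]
    rw [Gd_pos' hv]
    have := h.congr_of_eventuallyEq he
    rw [show 1 - Real.exp (-v) = 1 + Real.exp (-v) * (-1) by ring]; exact this

noncomputable def tq (a e : ℝ) : ℝ := (1 + Real.sqrt (1 + 4 * a * e)) / (2 * a)

lemma tq_quad {a e : ℝ} (ha : 0 < a) (he : 0 ≤ e) : a * tq a e ^ 2 = tq a e + e := by
  have hs : Real.sqrt (1 + 4 * a * e) ^ 2 = 1 + 4 * a * e :=
    Real.sq_sqrt (by positivity)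
  unfold tq
  field_simp
  ring_nf at hs ⊢
  nlinarith [hs]

lemma one_div_le_tq {a e : ℝ} (ha : 0 < a) (he : 0 ≤ e) : 1 / a ≤ tq a e := by
  have hs : (1:ℝ) ≤ Real.sqrt (1 + 4 * a * e) :=
    Real.one_le_sqrt.2 (by nlinarith)
  unfold tq
  rw [div_le_div_iff₀ ha (by positivity)]
  nlinarith

lemma tq_pos {a e : ℝ} (ha : 0 < a) (he : 0 ≤ e) : 0 < tq a e :=
  lt_of_lt_of_le (by positivity) (one_div_le_tq ha he)

lemma le_tq {a e d : ℝ} (ha : 0 < a) (he : 0 ≤ e) (hd : 0 < d)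
    (h : a * d ^ 2 ≤ d + e) : d ≤ tq a e := by
  have hq := tq_quad ha he
  have ht := tq_pos ha he
  have h1 : 1 ≤ a * tq a e := by
    have := one_div_le_tq ha he
    rw [div_le_iff₀ ha] at this; linarith [this]
  nlinarith [mul_pos ha hd, mul_pos ha ht]

lemma tq_le {a e d : ℝ} (ha : 0 < a) (he : 0 ≤ e) (hd : 0 < d)
    (h : d + e ≤ a * d ^ 2) : tq a e ≤ d := by
  have hq := tq_quad ha he
  have ht := tq_pos ha he
  have h1 : 1 ≤ a * tq a e := by
    have := one_div_le_tq ha he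
    rw [div_le_iff₀ ha] at this; linarith [this]
  nlinarith [mul_pos ha hd, mul_pos ha ht]

/-- The density `g(V) = |V| + e^{-|V|}` in volume coordinates (strictly convex with
bounded derivative): for fixed `V₁ > 0`, as `V₂ → ∞` the equilibrium point `Ṽ`
converges to `-log(1+e^{V₁})`, the perimeter difference `μ = P₃ - P₂` converges to
`2V₁ - log(1+e^{V₁}) + 2e^{-V₁/2} - 1 > 0`, and `μ > 0` for all `V₂ ≥ V₁`; so the
double interval is always better. -/
theorem bounded_derivative_example
    (g : ℝ → ℝ) (hg : ∀ v, g v = |v| + Real.exp (-|v|))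
    (V₁ : ℝ) (hV₁ : 0 < V₁)
    (Vt : ℝ → ℝ)
    (hVt : ∀ V₂, V₁ ≤ V₂ →
      deriv g (Vt V₂) + deriv g (Vt V₂ + V₁) + deriv g (Vt V₂ + V₁ + V₂) = 0)
    (μ : ℝ → ℝ)
    (hμ : ∀ V₂, μ V₂ = 2 * (g (V₁ / 2) + g ((V₁ + V₂) / 2)) -
      (g (Vt V₂) + g (Vt V₂ + V₁) + g (Vt V₂ + V₁ + V₂))) :
    Tendsto Vt atTop (nhds (-Real.log (1 + Real.exp V₁))) ∧
    Tendsto μ atTop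
      (nhds (2 * V₁ - Real.log (1 + Real.exp V₁) + 2 * Real.exp (-V₁ / 2) - 1)) ∧
    0 < 2 * V₁ - Real.log (1 + Real.exp V₁) + 2 * Real.exp (-V₁ / 2) - 1 ∧
    ∀ V₂, V₁ ≤ V₂ → 0 < μ V₂ := by
  have hgE : g = fun v => |v| + Real.exp (-|v|) := funext hg
  subst hgE
  have hder : ∀ v, deriv (fun v : ℝ => |v| + Real.exp (-|v|)) v = Gd v :=
    fun v => (hasDerivAt_g v).deriv
  set a : ℝ := 1 + Real.exp V₁ with ha_def
  have ha0 : 0 < a := by positivity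
  have haexp : 1 < Real.exp V₁ := Real.one_lt_exp_iff.2 hV₁
  set ε : ℝ → ℝ := fun V₂ => Real.exp (-(V₁ + V₂)) with hε_def
  set t : ℝ → ℝ := fun V₂ => tq a (ε V₂) with ht_def
  set W : ℝ → ℝ := fun V₂ => Real.log (t V₂) with hW_def
  set δ : ℝ → ℝ := fun V₂ => Real.exp (-((V₁ + V₂) / 2)) with hδ_def
  have hεpos : ∀ V₂, 0 < ε V₂ := fun V₂ => Real.exp_pos _
  have hδpos : ∀ V₂, 0 < δ V₂ := fun V₂ => Real.exp_pos _
  have htpos : ∀ V₂, 0 < t V₂ := fun V₂ => tq_pos ha0 (hεpos V₂).le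
  have hquad : ∀ V₂, a * t V₂ ^ 2 = t V₂ + ε V₂ := fun V₂ => tq_quad ha0 (hεpos V₂).le
  have h1a : ∀ V₂, 1 / a ≤ t V₂ := fun V₂ => one_div_le_tq ha0 (hεpos V₂).le
  have hexpW : ∀ V₂, Real.exp (W V₂) = t V₂ := fun V₂ => Real.exp_log (htpos V₂)
  have hδsq : ∀ V₂, δ V₂ ^ 2 = ε V₂ := by
    intro V₂
    simp only [hδ_def, hε_def, sq, ← Real.exp_add]
    congr 1; ring
  have htle : ∀ V₂, V₁ ≤ V₂ → t V₂ ≤ Real.exp (-V₁) := by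
    intro V₂ h
    apply tq_le ha0 (hεpos V₂).le (Real.exp_pos _)
    have e1 : Real.exp (-V₁) ^ 2 = Real.exp (-V₁ + -V₁) := by
      rw [Real.exp_add, sq]
    have e2 : Real.exp V₁ * Real.exp (-V₁ + -V₁) = Real.exp (-V₁) := by
      rw [← Real.exp_add]; congr 1; ring
    have e3 : ε V₂ ≤ Real.exp (-V₁ + -V₁) := by
      simp only [hε_def]; exact Real.exp_le_exp.2 (by linarith)
    rw [ha_def]; nlinarith
  have hδle : ∀ V₂, V₁ ≤ V₂ → δ V₂ ≤ t V₂ := by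
    intro V₂ h
    apply le_tq ha0 (hεpos V₂).le (hδpos V₂)
    have e1 : Real.exp V₁ * ε V₂ = Real.exp (-V₂) := by
      simp only [hε_def, ← Real.exp_add]; congr 1; ring
    have e2 : Real.exp (-V₂) ≤ δ V₂ := by
      simp only [hδ_def]; exact Real.exp_le_exp.2 (by linarith)
    have e3 := hδsq V₂
    rw [ha_def]; nlinarith
  have hεltδ : ∀ V₂, V₁ ≤ V₂ → ε V₂ < δ V₂ := by
    intro V₂ h
    have hδlt1 : δ V₂ < 1 := by
      simp only [hδ_def]; exact Real.exp_lt_one_iff.2 (by linarith)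
    nlinarith [hδsq V₂, hδpos V₂]
  have hWle : ∀ V₂, V₁ ≤ V₂ → W V₂ + V₁ ≤ 0 := by
    intro V₂ h
    have h2 := Real.log_le_log (htpos V₂) (htle V₂ h)
    rw [Real.log_exp] at h2
    simp only [hW_def] at *
    linarith
  have hWgt : ∀ V₂, V₁ ≤ V₂ → 0 < W V₂ + V₁ + V₂ := by
    intro V₂ h
    have h2 : ε V₂ < t V₂ := lt_of_lt_of_le (hεltδ V₂ h) (hδle V₂ h)
    have h3 := Real.log_lt_log (hεpos V₂) h2
    simp only [hε_def, Real.log_exp] at h3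
    simp only [hW_def] at *
    linarith
  have hW0 : ∀ V₂, V₁ ≤ V₂ → W V₂ ≤ 0 := by
    intro V₂ h; have := hWle V₂ h; linarith
  have hGW : ∀ V₂, V₁ ≤ V₂ → Gd (W V₂) + Gd (W V₂ + V₁) + Gd (W V₂ + V₁ + V₂) = 0 := by
    intro V₂ h
    rw [Gd_nonpos (hW0 V₂ h), Gd_nonpos (hWle V₂ h), Gd_pos' (hWgt V₂ h)]
    have e1 := hexpW V₂
    have e2 : Real.exp (W V₂ + V₁) = t V₂ * Real.exp V₁ := by rw [Real.exp_add, e1]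
    have e3 : Real.exp (-(W V₂ + V₁ + V₂)) = ε V₂ / t V₂ := by
      rw [show -(W V₂ + V₁ + V₂) = -(V₁ + V₂) + -(W V₂) by ring, Real.exp_add,
        Real.exp_neg (W V₂), e1]
      simp only [hε_def]
      rw [div_eq_mul_inv]
    rw [e1, e2, e3]
    have hq := hquad V₂
    have htp := (htpos V₂).ne'
    field_simp
    rw [ha_def] at hq
    nlinarith [hq]
  have hVtW : ∀ V₂, V₁ ≤ V₂ → Vt V₂ = W V₂ := by
    intro V₂ h
    have hmono : StrictMono (fun v => Gd v + Gd (v + V₁) + Gd (v + V₁ + V₂)) := by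
      intro x y hxy
      have h1 := strictMono_Gd hxy
      have h2 := strictMono_Gd (show x + V₁ < y + V₁ by linarith)
      have h3 := strictMono_Gd (show x + V₁ + V₂ < y + V₁ + V₂ by linarith)
      dsimp only; linarith
    apply hmono.injective
    dsimp only
    have h0 := hVt V₂ h
    simp only [hder] at h0
    rw [h0, hGW V₂ h]
  have hμval : ∀ V₂, V₁ ≤ V₂ →
      μ V₂ = 2 * V₁ + 2 * Real.exp (-V₁ / 2) - 1 + W V₂ + 2 * δ V₂ - 2 * (ε V₂ / t V₂) := by
    intro V₂ h
    rw [hμ V₂, hVtW V₂ h]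
    have habs1 : |V₁ / 2| = V₁ / 2 := abs_of_pos (by linarith)
    have habs2 : |(V₁ + V₂) / 2| = (V₁ + V₂) / 2 := abs_of_pos (by linarith)
    have habs3 : |W V₂| = -W V₂ := abs_of_nonpos (hW0 V₂ h)
    have habs4 : |W V₂ + V₁| = -(W V₂ + V₁) := abs_of_nonpos (hWle V₂ h)
    have habs5 : |W V₂ + V₁ + V₂| = W V₂ + V₁ + V₂ := abs_of_pos (hWgt V₂ h)
    simp only [habs1, habs2, habs3, habs4, habs5, neg_neg]
    have e1 := hexpW V₂
    have e2 : Real.exp (W V₂ + V₁) = t V₂ * Real.exp V₁ := by rw [Real.exp_add, e1]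
    have e3 : Real.exp (-(W V₂ + V₁ + V₂)) = ε V₂ / t V₂ := by
      rw [show -(W V₂ + V₁ + V₂) = -(V₁ + V₂) + -(W V₂) by ring, Real.exp_add,
        Real.exp_neg (W V₂), e1]
      simp only [hε_def]
      rw [div_eq_mul_inv]
    have e4 : Real.exp (-((V₁ + V₂) / 2)) = δ V₂ := rfl
    have e5 : Real.exp (-(V₁ / 2)) = Real.exp (-V₁ / 2) := by congr 1; ring
    rw [e1, e2, e3, e4, e5]
    have hq := hquad V₂
    have htp := (htpos V₂).ne'
    field_simp
    rw [ha_def] at hq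
    nlinarith [hq, htpos V₂]
  have hLpos : 0 < 2 * V₁ - Real.log a + 2 * Real.exp (-V₁ / 2) - 1 := by
    have h1 : Real.log a ≤ V₁ + Real.log 2 := by
      have hle : a ≤ 2 * Real.exp V₁ := by rw [ha_def]; linarith
      have := Real.log_le_log ha0 hle
      rw [Real.log_mul two_ne_zero (Real.exp_pos _).ne', Real.log_exp] at this
      linarith
    have h2 : 1 - V₁ / 2 ≤ Real.exp (-V₁ / 2) := by
      have := Real.add_one_le_exp (-V₁ / 2); linarith
    have h3 : Real.log 2 < 1 := by
      have := Real.log_two_lt_d9; linarith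
    linarith
  have hμpos : ∀ V₂, V₁ ≤ V₂ → 0 < μ V₂ := by
    intro V₂ h
    rw [hμval V₂ h]
    have hWlb : -Real.log a ≤ W V₂ := by
      have h2 := Real.log_le_log (by positivity) (h1a V₂)
      rw [one_div, Real.log_inv] at h2
      exact h2
    have hdiv : ε V₂ / t V₂ ≤ δ V₂ := by
      rw [div_le_iff₀ (htpos V₂)]
      nlinarith [hδsq V₂, hδle V₂ h, hδpos V₂]
    have := hδpos V₂
    linarith
  have hbot : Tendsto (fun V₂ : ℝ => -(V₁ + V₂)) atTop atBot := by
    have h1 : Tendsto (fun V₂ : ℝ => -V₂) atTop atBot := tendsto_neg_atTop_atBot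
    have h2 := tendsto_atBot_add_const_left atTop (-V₁) h1
    exact h2.congr (fun x => by ring)
  have hεlim : Tendsto ε atTop (nhds 0) := Real.tendsto_exp_atBot.comp hbot
  have hδlim : Tendsto δ atTop (nhds 0) := by
    have h2 := hbot.atBot_div_const (by norm_num : (0:ℝ) < 2)
    have h3 : Tendsto (fun V₂ : ℝ => -((V₁ + V₂) / 2)) atTop atBot :=
      h2.congr (fun x => by ring)
    exact Real.tendsto_exp_atBot.comp h3
  have htlim : Tendsto t atTop (nhds (1 / a)) := by
    have hc : Continuous (fun e : ℝ => (1 + Real.sqrt (1 + 4 * a * e)) / (2 * a)) := by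
      fun_prop
    have h2 := (hc.continuousAt (x := 0)).tendsto.comp hεlim
    have h3 : (1 + Real.sqrt (1 + 4 * a * 0)) / (2 * a) = 1 / a := by
      rw [mul_zero, add_zero, Real.sqrt_one]
      rw [div_eq_div_iff (by positivity) (by positivity)]
      ring
    rw [h3] at h2
    exact h2
  have hWlim : Tendsto W atTop (nhds (-Real.log a)) := by
    have hc : ContinuousAt Real.log (1 / a) := Real.continuousAt_log (by positivity)
    have h2 := hc.tendsto.comp htlim
    rw [one_div, Real.log_inv] at h2
    exact h2
  have hVtlim : Tendsto Vt atTop (nhds (-Real.log a)) := by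
    apply hWlim.congr'
    filter_upwards [eventually_ge_atTop V₁] with V₂ h
    exact (hVtW V₂ h).symm
  have hdivlim : Tendsto (fun V₂ => ε V₂ / t V₂) atTop (nhds 0) := by
    have h2 := hεlim.div htlim (by positivity : (1:ℝ) / a ≠ 0)
    rw [zero_div] at h2
    exact h2
  have hμlim : Tendsto μ atTop (nhds (2 * V₁ - Real.log a + 2 * Real.exp (-V₁ / 2) - 1)) := by
    have h2 : Tendsto (fun V₂ => 2 * V₁ + 2 * Real.exp (-V₁ / 2) - 1 + W V₂ + 2 * δ V₂
        - 2 * (ε V₂ / t V₂)) atTop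
        (nhds (2 * V₁ + 2 * Real.exp (-V₁ / 2) - 1 + -Real.log a + 2 * 0 - 2 * 0)) :=
      ((tendsto_const_nhds.add hWlim).add (hδlim.const_mul 2)).sub (hdivlim.const_mul 2)
    have h3 : 2 * V₁ + 2 * Real.exp (-V₁ / 2) - 1 + -Real.log a + 2 * 0 - 2 * 0
        = 2 * V₁ - Real.log a + 2 * Real.exp (-V₁ / 2) - 1 := by ring
    rw [h3] at h2
    apply h2.congr'
    filter_upwards [eventually_ge_atTop V₁] with V₂ h
    exact (hμval V₂ h).symm
  exact ⟨hVtlim, hμlim, hLpos, hμpos⟩
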